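/- Let F be a simple graph, G a group, and φ : G → Aut(F) an injective group homomorphism. Suppose that (a) every g ∈ G such that φ(g) fixes pointwise the vertex set of every connected component of F with at most one exception satisfies g = 1; and (b) there exist g ∈ G and a connected component Γ of F such that φ(g) maps the vertex set of Γ onto itself and does not fix Γ pointwise. Then φ is not surjective; that is, φ embeds G as a proper subgroup of Aut(F). -/
import Mathlib


/-- If `φ : G →* Aut(F)` is an injective group homomorphism such
that (a) any `g` whose image fixes pointwise the vertex set of every connected
component with at most one exception is trivial, and (b) some `φ g` maps the
vertex set of a connected component `Γ` onto itself without fixing it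
pointwise, then `φ` is not surjective, i.e. it embeds `G` as a proper subgroup
of `Aut(F)`. -/
theorem stmt_3 {V G : Type*} [Group G] (F : SimpleGraph V)
    (φ : G →* (F ≃g F)) (hinj : Function.Injective φ)
    (ha : ∀ g : G, (∃ Γ₀ : F.ConnectedComponent, ∀ C : F.ConnectedComponent,
        C ≠ Γ₀ → ∀ v ∈ C.supp, (φ g) v = v) → g = 1)
    (hb : ∃ (g : G) (Γ : F.ConnectedComponent),
        ((φ g : V → V) '' Γ.supp = Γ.supp) ∧ ∃ v ∈ Γ.supp, (φ g) v ≠ v) :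
    ¬ Function.Surjective φ := by
  intro hsurj
  obtain ⟨g, Γ, himg, v₀, hv₀, hne⟩ := hb
  set e : F ≃g F := φ g with he
  have hfwd : ∀ x ∈ Γ.supp, e x ∈ Γ.supp := by
    intro x hx
    rw [← himg]; exact ⟨x, hx, rfl⟩
  have hbwd : ∀ x ∈ Γ.supp, e.symm x ∈ Γ.supp := by
    intro x hx
    rw [← himg] at hx
    obtain ⟨y, hy, rfl⟩ := hx
    simpa using hy
  have hadj : ∀ {x y : V}, F.Adj x y → (x ∈ Γ.supp ↔ y ∈ Γ.supp) := by
    intro x y h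
    simp only [SimpleGraph.ConnectedComponent.mem_supp_iff]
    rw [SimpleGraph.ConnectedComponent.sound h.reachable]
  classical
  -- the automorphism that is `e` on `Γ` and the identity elsewhere
  set ψeq : V ≃ V :=
    { toFun := fun x => if x ∈ Γ.supp then e x else x
      invFun := fun x => if x ∈ Γ.supp then e.symm x else x
      left_inv := by
        intro x
        by_cases hx : x ∈ Γ.supp
        · simp [hx, hfwd x hx]
        · simp [hx]
      right_inv := by
        intro x
        by_cases hx : x ∈ Γ.supp
        · simp [hx, hbwd x hx]
        · simp [hx] } with hψeq
  have hψmap : ∀ {x y : V}, F.Adj (ψeq x) (ψeq y) ↔ F.Adj x y := by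
    intro x y
    by_cases hx : x ∈ Γ.supp <;> by_cases hy : y ∈ Γ.supp
    · simp only [hψeq, Equiv.coe_fn_mk, if_pos hx, if_pos hy]
      exact e.map_adj_iff
    · simp only [hψeq, Equiv.coe_fn_mk, if_pos hx, if_neg hy]
      constructor
      · intro h; exact absurd ((hadj h).mp (hfwd x hx)) hy
      · intro h; exact absurd ((hadj h).mp hx) hy
    · simp only [hψeq, Equiv.coe_fn_mk, if_neg hx, if_pos hy]
      constructor
      · intro h; exact absurd ((hadj h).mpr (hfwd y hy)) hx
      · intro h; exact absurd ((hadj h).mpr hy) hx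
    · simp only [hψeq, Equiv.coe_fn_mk, if_neg hx, if_neg hy]
  set ψ : F ≃g F := ⟨ψeq, hψmap⟩ with hψ
  obtain ⟨h, hh⟩ := hsurj ψ
  have h1 : h = 1 := by
    apply ha h
    refine ⟨Γ, fun C hC v hv => ?_⟩
    have hvΓ : v ∉ Γ.supp := by
      simp only [SimpleGraph.ConnectedComponent.mem_supp_iff] at hv ⊢
      rw [hv]; exact hC
    rw [hh]
    show (if v ∈ Γ.supp then e v else v) = v
    rw [if_neg hvΓ]
  rw [h1, map_one] at hh
  have : ψ v₀ = v₀ := by rw [← hh]; rfl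
  simp only [hψ, hψeq, RelIso.coe_fn_mk, Equiv.coe_fn_mk, if_pos hv₀] at this
  exact hne this
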